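/- arXiv:1407.1930 — 4 statements merged into one kernel-verified Lean document; each statement's English description precedes it below -/
import Mathlib

section
/- Let r > 0 and let x, y be points in the Euclidean plane ℝ² with ℓ = dist(x,y) satisfying 0 ≤ ℓ ≤ 4r. Then the Lebesgue measure of the 'danger crescent' closedBall(y,2r) \ closedBall(x,2r) equals A(ℓ) = r²·(8·arcsin(ℓ/(4r)) + (ℓ/r)·√(4 − ℓ²/(4r²))). -/
open Real MeasureTheory Metric


lemma crescent_hasDerivAt {R b : ℝ} (hR : 0 < R) (h1 : -R < b) (h2 : b < R) :
    HasDerivAt (fun t => R^2 * arcsin (t/R) + t * Real.sqrt (R^2 - t^2))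
      (2 * Real.sqrt (R^2 - b^2)) b := by
  have hpos : 0 < R^2 - b^2 := by nlinarith
  have hs : 0 < Real.sqrt (R^2 - b^2) := Real.sqrt_pos.2 hpos
  have hs2 : Real.sqrt (R^2 - b^2) ^ 2 = R^2 - b^2 := Real.sq_sqrt hpos.le
  have hn1 : b / R ≠ -1 := by
    intro h; rw [div_eq_iff hR.ne'] at h; simp at h; linarith
  have hp1 : b / R ≠ 1 := by
    intro h; rw [div_eq_iff hR.ne'] at h; simp at h; linarith
  have harc : HasDerivAt (fun t : ℝ => R^2 * arcsin (t/R))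
      (R^2 * ((1 / Real.sqrt (1 - (b/R)^2)) * (1/R))) b := by
    exact ((Real.hasDerivAt_arcsin hn1 hp1).comp b
      ((hasDerivAt_id b).div_const R)).const_mul (R^2)
  have hu : HasDerivAt (fun t : ℝ => R^2 - t^2) (-(2*b)) b := by
    simpa using (hasDerivAt_pow 2 b).const_sub (R^2)
  have hsq : HasDerivAt (fun t : ℝ => Real.sqrt (R^2 - t^2))
      (1 / (2 * Real.sqrt (R^2 - b^2)) * (-(2*b))) b :=
    (Real.hasDerivAt_sqrt hpos.ne').comp b hu
  have hmul : HasDerivAt (fun t : ℝ => t * Real.sqrt (R^2 - t^2))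
      (1 * Real.sqrt (R^2 - b^2) + b * (1 / (2 * Real.sqrt (R^2 - b^2)) * (-(2*b)))) b :=
    (hasDerivAt_id b).mul hsq
  have key : Real.sqrt (1 - (b/R)^2) = Real.sqrt (R^2 - b^2) / R := by
    rw [show (1 - (b/R)^2) = (R^2 - b^2)/R^2 by field_simp,
      Real.sqrt_div hpos.le, Real.sqrt_sq hR.le]
  refine (harc.add hmul).congr_deriv ?_
  symm
  rw [key]
  field_simp
  linear_combination hs2

lemma crescent_integral {R a c : ℝ} (hR : 0 < R) (ha : -R ≤ a) (hac : a ≤ c) (hc : c ≤ R) :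
    ∫ b in a..c, 2 * Real.sqrt (R^2 - b^2) =
      (R^2 * arcsin (c/R) + c * Real.sqrt (R^2 - c^2)) -
      (R^2 * arcsin (a/R) + a * Real.sqrt (R^2 - a^2)) := by
  have hcont : Continuous (fun b : ℝ => 2 * Real.sqrt (R^2 - b^2)) :=
    continuous_const.mul (Real.continuous_sqrt.comp (continuous_const.sub (continuous_pow 2)))
  apply intervalIntegral.integral_eq_sub_of_hasDeriv_right_of_le hac
  · apply Continuous.continuousOn
    exact (continuous_const.mul (Real.continuous_arcsin.comp (continuous_id.div_const R))).add
      (continuous_id.mul (Real.continuous_sqrt.comp (continuous_const.sub (continuous_pow 2))))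
  · intro t ht
    exact (crescent_hasDerivAt hR (lt_of_le_of_lt ha ht.1) (lt_of_lt_of_le ht.2 hc)).hasDerivWithinAt
  · exact hcont.intervalIntegrable a c

lemma crescent_slice {R ℓ : ℝ} (hℓ0 : 0 ≤ ℓ) (b : ℝ) :
    volume {a : ℝ | b^2 + (a - ℓ)^2 ≤ R^2 ∧ R^2 < b^2 + a^2} =
      ENNReal.ofReal (min ℓ (2 * Real.sqrt (R^2 - b^2))) := by
  rcases lt_or_ge (R^2 - b^2) 0 with h | h
  · have he : {a : ℝ | b^2 + (a - ℓ)^2 ≤ R^2 ∧ R^2 < b^2 + a^2} = ∅ := by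
      ext a; simp only [Set.mem_setOf_eq, Set.mem_empty_iff_false, iff_false, not_and]
      intro h1; nlinarith [sq_nonneg (a - ℓ)]
    rw [he, measure_empty, Real.sqrt_eq_zero_of_nonpos h.le]
    rw [mul_zero, min_eq_right hℓ0, ENNReal.ofReal_zero]
  · set g := Real.sqrt (R^2 - b^2) with hg
    have hg0 : 0 ≤ g := Real.sqrt_nonneg _
    have hg2 : g^2 = R^2 - b^2 := Real.sq_sqrt h
    have hset : {a : ℝ | b^2 + (a - ℓ)^2 ≤ R^2 ∧ R^2 < b^2 + a^2}
        = {a : ℝ | (a - ℓ)^2 ≤ g^2 ∧ g^2 < a^2} := by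
      ext a; simp only [Set.mem_setOf_eq]
      constructor <;> rintro ⟨h1, h2⟩ <;> constructor <;> nlinarith
    rw [hset]
    rcases le_or_gt ℓ (2*g) with hcase | hcase
    · have : {a : ℝ | (a - ℓ)^2 ≤ g^2 ∧ g^2 < a^2} = Set.Ioc g (ℓ + g) := by
        ext a; simp only [Set.mem_setOf_eq, Set.mem_Ioc]
        constructor
        · rintro ⟨h1, h2⟩
          constructor
          · by_contra hle
            push_neg at hle
            rcases eq_or_lt_of_le hℓ0 with hl0 | hl0
            · nlinarith
            · have ha2 : 0 < a := by nlinarith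
              nlinarith
          · nlinarith
        · rintro ⟨h1, h2⟩
          constructor <;> nlinarith
      rw [this, Real.volume_Ioc, min_eq_left hcase]
      congr 1; ring
    · have : {a : ℝ | (a - ℓ)^2 ≤ g^2 ∧ g^2 < a^2} = Set.Icc (ℓ - g) (ℓ + g) := by
        ext a; simp only [Set.mem_setOf_eq, Set.mem_Icc]
        constructor
        · rintro ⟨h1, h2⟩
          constructor <;> nlinarith
        · rintro ⟨h1, h2⟩
          constructor <;> nlinarith
      rw [this, Real.volume_Icc, min_eq_right hcase.le]
      congr 1; ring

set_option maxHeartbeats 1000000 in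
lemma crescent_value (r ℓ : ℝ) (hr : 0 < r) (hℓ0 : 0 ≤ ℓ) (hℓ4 : ℓ ≤ 4*r) :
    ∫ b : ℝ, min ℓ (2 * Real.sqrt ((2*r)^2 - b^2)) =
      r^2 * (8 * arcsin (ℓ/(4*r)) + (ℓ/r) * Real.sqrt (4 - ℓ^2/(4*r^2))) := by
  set R := 2*r with hRdef
  have hR : 0 < R := by positivity
  have hℓR : ℓ ≤ 2*R := by rw [hRdef]; linarith
  have hq : 0 ≤ R^2 - ℓ^2/4 := by nlinarith
  set f : ℝ → ℝ := fun b => min ℓ (2 * Real.sqrt (R^2 - b^2)) with hf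
  have hfc : Continuous f :=
    continuous_const.min (continuous_const.mul
      (Real.continuous_sqrt.comp (continuous_const.sub (continuous_pow 2))))
  set b₀ := Real.sqrt (R^2 - ℓ^2/4) with hb₀def
  have hb₀0 : 0 ≤ b₀ := Real.sqrt_nonneg _
  have hb₀2 : b₀^2 = R^2 - ℓ^2/4 := Real.sq_sqrt hq
  have hb₀R : b₀ ≤ R := by
    have h := Real.sqrt_le_sqrt (show R^2 - ℓ^2/4 ≤ R^2 by nlinarith)
    rwa [Real.sqrt_sq hR.le] at h
  have hzero : ∀ b : ℝ, b ∉ Set.Ioc (-R) R → f b = 0 := by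
    intro b hb
    simp only [Set.mem_Ioc, not_and_or, not_lt, not_le] at hb
    have : R^2 - b^2 ≤ 0 := by rcases hb with hb | hb <;> nlinarith
    rw [hf]; simp only [Real.sqrt_eq_zero_of_nonpos this, mul_zero, min_eq_right hℓ0]
  have hsupp : Function.support f ⊆ Set.Ioc (-R) R := by
    intro b hb
    by_contra hmem
    exact hb (hzero b hmem)
  rw [← intervalIntegral.integral_eq_integral_of_support_subset hsupp]
  -- split the interval
  have hint : ∀ u v : ℝ, IntervalIntegrable f volume u v := fun u v => hfc.intervalIntegrable u v
  have hsplit : ∫ b in (-R)..R, f b =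
      (∫ b in (-R)..(-b₀), f b) + (∫ b in (-b₀)..b₀, f b) + (∫ b in b₀..R, f b) := by
    rw [intervalIntegral.integral_add_adjacent_intervals (hint _ _) (hint _ _),
      intervalIntegral.integral_add_adjacent_intervals (hint _ _) (hint _ _)]
  rw [hsplit]
  have sqrt_half : Real.sqrt (ℓ^2/4) = ℓ/2 := by
    rw [show ℓ^2/4 = (ℓ/2)^2 by ring, Real.sqrt_sq (by linarith)]
  -- middle integral
  have hmid : (∫ b in (-b₀)..b₀, f b) = 2 * b₀ * ℓ := by
    rw [intervalIntegral.integral_congr (g := fun _ => ℓ) ?_]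
    · rw [intervalIntegral.integral_const, smul_eq_mul]; ring
    · intro b hb
      rw [Set.uIcc_of_le (by linarith)] at hb
      have hb2 : b^2 ≤ b₀^2 := by
        rcases hb with ⟨hb1, hb2⟩; nlinarith
      have : ℓ/2 ≤ Real.sqrt (R^2 - b^2) := by
        rw [← sqrt_half]; exact Real.sqrt_le_sqrt (by nlinarith)
      exact min_eq_left (by linarith)
  -- side integrals
  have hside : ∀ b : ℝ, b₀^2 ≤ b^2 → f b = 2 * Real.sqrt (R^2 - b^2) := by
    intro b hb2
    have : Real.sqrt (R^2 - b^2) ≤ ℓ/2 := by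
      rw [← sqrt_half]; exact Real.sqrt_le_sqrt (by nlinarith)
    exact min_eq_right (by linarith)
  have hright : (∫ b in b₀..R, f b) =
      (R^2 * arcsin (R/R) + R * Real.sqrt (R^2 - R^2)) -
      (R^2 * arcsin (b₀/R) + b₀ * Real.sqrt (R^2 - b₀^2)) := by
    rw [intervalIntegral.integral_congr (g := fun b => 2 * Real.sqrt (R^2 - b^2)) ?_]
    · exact crescent_integral hR (by linarith) hb₀R le_rfl
    · intro b hb
      rw [Set.uIcc_of_le hb₀R] at hb
      exact hside b (by rcases hb with ⟨h1, h2⟩; nlinarith)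
  have hleft : (∫ b in (-R)..(-b₀), f b) =
      (R^2 * arcsin ((-b₀)/R) + (-b₀) * Real.sqrt (R^2 - (-b₀)^2)) -
      (R^2 * arcsin ((-R)/R) + (-R) * Real.sqrt (R^2 - (-R)^2)) := by
    rw [intervalIntegral.integral_congr (g := fun b => 2 * Real.sqrt (R^2 - b^2)) ?_]
    · exact crescent_integral hR le_rfl (by linarith) (by linarith)
    · intro b hb
      rw [Set.uIcc_of_le (by linarith)] at hb
      exact hside b (by rcases hb with ⟨h1, h2⟩; nlinarith)
  rw [hmid, hright, hleft]
  have e1 : arcsin (R/R) = π/2 := by rw [div_self hR.ne', Real.arcsin_one]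
  have e2 : arcsin ((-R)/R) = -(π/2) := by
    rw [neg_div, div_self hR.ne', Real.arcsin_neg, Real.arcsin_one]
  have e3 : Real.sqrt (R^2 - R^2) = 0 := by rw [sub_self, Real.sqrt_zero]
  have e4 : Real.sqrt (R^2 - (-R)^2) = 0 := by rw [neg_sq, sub_self, Real.sqrt_zero]
  have e5 : Real.sqrt (R^2 - b₀^2) = ℓ/2 := by
    rw [hb₀2, show R^2 - (R^2 - ℓ^2/4) = ℓ^2/4 by ring, sqrt_half]
  have e6 : Real.sqrt (R^2 - (-b₀)^2) = ℓ/2 := by rw [neg_sq]; exact e5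
  have e7 : arcsin ((-b₀)/R) = -arcsin (b₀/R) := by rw [neg_div, Real.arcsin_neg]
  rw [e1, e2, e3, e4, e5, e6, e7]
  -- now: π R² - 2R² arcsin(b₀/R) + b₀ ℓ, and convert arcsin
  have harc : arcsin (b₀/R) = π/2 - arcsin (ℓ/(4*r)) := by
    have h1 : Real.arccos (b₀/R) = arcsin (ℓ/(4*r)) := by
      rw [Real.arccos_eq_arcsin (by positivity)]
      congr 1
      rw [show 1 - (b₀/R)^2 = (ℓ/(4*r))^2 by
        rw [div_pow, hb₀2]; field_simp; rw [hRdef]; ring]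
      exact Real.sqrt_sq (by positivity)
    have h2 := Real.arccos_eq_pi_div_two_sub_arcsin (b₀/R)
    linarith [h1, h2]
  rw [harc]
  have hb₀eq : b₀ = r * Real.sqrt (4 - ℓ^2/(4*r^2)) := by
    rw [hb₀def, show R^2 - ℓ^2/4 = r^2 * (4 - ℓ^2/(4*r^2)) by
      rw [hRdef]; field_simp; ring,
      Real.sqrt_mul (sq_nonneg r), Real.sqrt_sq hr.le]
  rw [hb₀eq, hRdef]
  have : arcsin (ℓ/(4*r)) = arcsin (ℓ/(4*r)) := rfl
  field_simp
  ring

set_option maxHeartbeats 1000000 in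
theorem crescent_area (r : ℝ) (hr : 0 < r)
    (x y : EuclideanSpace ℝ (Fin 2)) (ℓ : ℝ) (hℓ : ℓ = dist x y)
    (hℓ0 : 0 ≤ ℓ) (hℓ4 : ℓ ≤ 4 * r) :
    volume (closedBall y (2 * r) \ closedBall x (2 * r)) =
      ENNReal.ofReal
        (r ^ 2 * (8 * arcsin (ℓ / (4 * r)) +
          (ℓ / r) * Real.sqrt (4 - ℓ ^ 2 / (4 * r ^ 2)))) := by
  classical
  set w : EuclideanSpace ℝ (Fin 2) := EuclideanSpace.single (1 : Fin 2) ℓ with hw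
  have hnw : ‖w‖ = ℓ := by
    rw [hw, EuclideanSpace.norm_single, Real.norm_eq_abs, abs_of_nonneg hℓ0]
  have hnv : ‖y - x‖ = ℓ := by rw [← dist_eq_norm, dist_comm, ← hℓ]
  set L := Submodule.reflection (ℝ ∙ (y - x - w))ᗮ with hLdef
  have hLv : L (y - x) = w := Submodule.reflection_sub (by rw [hnv, hnw])
  have hTmp : MeasurePreserving (fun p : EuclideanSpace ℝ (Fin 2) => L (p - x))
      volume volume :=
    L.measurePreserving.comp (measurePreserving_sub_right volume x)
  have hpre : closedBall y (2*r) \ closedBall x (2*r) =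
      (fun p : EuclideanSpace ℝ (Fin 2) => L (p - x)) ⁻¹'
        (closedBall w (2*r) \ closedBall 0 (2*r)) := by
    ext p
    simp only [Set.mem_preimage, Set.mem_diff, mem_closedBall]
    have e1 : dist (L (p - x)) w = dist p y := by
      rw [← hLv, L.dist_map, dist_sub_right]
    have e2 : dist (L (p - x)) 0 = dist p x := by
      rw [← map_zero L, L.dist_map, dist_zero_right, ← dist_eq_norm]
    rw [e1, e2]
  have hmeas : MeasurableSet (closedBall w (2*r) \ closedBall 0 (2*r)) :=
    measurableSet_closedBall.diff measurableSet_closedBall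
  rw [hpre, hTmp.measure_preimage hmeas.nullMeasurableSet]
  -- transfer to ℝ × ℝ
  set S₂ : Set (ℝ × ℝ) :=
    {q : ℝ × ℝ | q.1^2 + (q.2 - ℓ)^2 ≤ (2*r)^2 ∧ (2*r)^2 < q.1^2 + q.2^2} with hS₂def
  have hS₂m : MeasurableSet S₂ := by
    have h1 : MeasurableSet {q : ℝ × ℝ | q.1^2 + (q.2 - ℓ)^2 ≤ (2*r)^2} :=
      measurableSet_le (by fun_prop) measurable_const
    have h2 : MeasurableSet {q : ℝ × ℝ | (2*r)^2 < q.1^2 + q.2^2} :=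
      measurableSet_lt measurable_const (by fun_prop)
    exact h1.inter h2
  have hφ : MeasurePreserving (fun p : EuclideanSpace ℝ (Fin 2) => ((p 0 : ℝ), (p 1 : ℝ)))
      volume volume :=
    (volume_preserving_finTwoArrow ℝ).comp
      (EuclideanSpace.volume_preserving_symm_measurableEquiv_toLp (ι := Fin 2))
  have hset2 : closedBall w (2*r) \ closedBall 0 (2*r) =
      (fun p : EuclideanSpace ℝ (Fin 2) => ((p 0 : ℝ), (p 1 : ℝ))) ⁻¹' S₂ := by
    ext p
    have w0 : w 0 = 0 := by
      rw [hw, EuclideanSpace.single_apply]; simp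
    have w1 : w 1 = ℓ := by
      rw [hw, EuclideanSpace.single_apply]; simp
    have hd1 : dist p w = Real.sqrt ((p 0)^2 + (p 1 - ℓ)^2) := by
      rw [EuclideanSpace.dist_eq, Fin.sum_univ_two, w0, w1, Real.dist_eq, Real.dist_eq,
        sq_abs, sq_abs, sub_zero]
    have hd2 : dist p 0 = Real.sqrt ((p 0)^2 + (p 1)^2) := by
      rw [EuclideanSpace.dist_eq, Fin.sum_univ_two]
      have z0 : (0 : EuclideanSpace ℝ (Fin 2)) 0 = 0 := rfl
      have z1 : (0 : EuclideanSpace ℝ (Fin 2)) 1 = 0 := rfl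
      rw [z0, z1, Real.dist_eq, Real.dist_eq, sq_abs, sq_abs, sub_zero, sub_zero]
    simp only [Set.mem_preimage, Set.mem_diff, mem_closedBall, hS₂def, Set.mem_setOf_eq]
    rw [hd1, hd2, Real.sqrt_le_iff, not_le,
      show (2*r < Real.sqrt ((p 0)^2 + (p 1)^2)) ↔ ((2*r)^2 < (p 0)^2 + (p 1)^2) from
        (Real.lt_sqrt (by positivity)).trans Iff.rfl]
    constructor
    · rintro ⟨⟨_, h1⟩, h2⟩; exact ⟨h1, h2⟩
    · rintro ⟨h1, h2⟩; exact ⟨⟨by positivity, h1⟩, h2⟩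
  rw [hset2, hφ.measure_preimage hS₂m.nullMeasurableSet]
  -- slice via Fubini
  rw [show (volume : Measure (ℝ × ℝ)) = (volume : Measure ℝ).prod volume from
    (Measure.volume_eq_prod ℝ ℝ), Measure.prod_apply hS₂m]
  have hslice : ∀ b : ℝ, volume (Prod.mk b ⁻¹' S₂) =
      ENNReal.ofReal (min ℓ (2 * Real.sqrt ((2*r)^2 - b^2))) := by
    intro b
    have : Prod.mk b ⁻¹' S₂ =
        {a : ℝ | b^2 + (a - ℓ)^2 ≤ (2*r)^2 ∧ (2*r)^2 < b^2 + a^2} := rfl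
    rw [this]
    exact crescent_slice hℓ0 b
  simp_rw [hslice]
  -- lintegral to integral
  set f : ℝ → ℝ := fun b => min ℓ (2 * Real.sqrt ((2*r)^2 - b^2)) with hf
  have hfc : Continuous f :=
    continuous_const.min (continuous_const.mul
      (Real.continuous_sqrt.comp (continuous_const.sub (continuous_pow 2))))
  have hcs : HasCompactSupport f := by
    apply HasCompactSupport.intro (isCompact_Icc (a := -(2*r)) (b := 2*r))
    intro b hb
    simp only [Set.mem_Icc, not_and_or, not_le] at hb
    have : (2*r)^2 - b^2 ≤ 0 := by rcases hb with hb | hb <;> nlinarith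
    rw [hf]
    simp only [Real.sqrt_eq_zero_of_nonpos this, mul_zero, min_eq_right hℓ0]
  have hintg : Integrable f := hfc.integrable_of_hasCompactSupport hcs
  have hnn : 0 ≤ᵐ[volume] f := ae_of_all _ fun b => le_min hℓ0 (by positivity)
  rw [← MeasureTheory.ofReal_integral_eq_lintegral_ofReal hintg hnn]
  rw [show ∫ b, f b = r^2 * (8 * arcsin (ℓ/(4*r)) + (ℓ/r) * Real.sqrt (4 - ℓ^2/(4*r^2)))
    from crescent_value r ℓ hr hℓ0 hℓ4]
end

section
/- Let r > 0 and let x, y be points in the Euclidean plane ℝ² with ℓ = dist(x,y) satisfying 0 ≤ ℓ ≤ 4r. Then the Lebesgue measure of the intersection closedBall(x,2r) ∩ closedBall(y,2r) equals 4πr² − A(ℓ), where A(ℓ) = r²·(8·arcsin(ℓ/(4r)) + (ℓ/r)·√(4 − ℓ²/(4r²))). -/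
open Real MeasureTheory Metric

lemma seg_integral {R h : ℝ} (hR : 0 < R) (h0 : 0 ≤ h) (hhR : h ≤ R) :
    ∫ a in h..R, 2 * Real.sqrt (R^2 - a^2)
      = R^2 * (π/2) - R^2 * arcsin (h/R) - h * Real.sqrt (R^2 - h^2) := by
  set F : ℝ → ℝ := fun a => a * Real.sqrt (R^2 - a^2) + R^2 * arcsin (a/R) with hF
  have key : ∀ a ∈ Set.Ioo h R, HasDerivAt F (2 * Real.sqrt (R^2 - a^2)) a := by
    intro a ha
    have hlt : a < R := ha.2
    have ha0 : 0 ≤ a := h0.trans ha.1.le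
    have hpos : 0 < R^2 - a^2 := by nlinarith
    have hs0 : 0 < Real.sqrt (R^2 - a^2) := Real.sqrt_pos.2 hpos
    have hss : Real.sqrt (R^2 - a^2) * Real.sqrt (R^2 - a^2) = R^2 - a^2 :=
      Real.mul_self_sqrt hpos.le
    have d1 : HasDerivAt (fun x : ℝ => R^2 - x^2) (-(2 * a^1)) a :=
      (hasDerivAt_pow 2 a).const_sub (R^2)
    have d2 : HasDerivAt (fun x : ℝ => Real.sqrt (R^2 - x^2))
        (1 / (2 * Real.sqrt (R^2 - a^2)) * (-(2 * a^1))) a :=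
      (Real.hasDerivAt_sqrt hpos.ne').comp a d1
    have d3 : HasDerivAt (fun x : ℝ => x * Real.sqrt (R^2 - x^2))
        (1 * Real.sqrt (R^2 - a^2) + a * (1 / (2 * Real.sqrt (R^2 - a^2)) * (-(2 * a^1)))) a :=
      (hasDerivAt_id a).mul d2
    have h1 : a / R ≠ -1 := by
      have : 0 ≤ a / R := div_nonneg ha0 hR.le
      linarith
    have h2 : a / R ≠ 1 := by
      have : a / R < 1 := (div_lt_one hR).2 hlt
      linarith
    have d4 : HasDerivAt (fun x : ℝ => x / R) (1 / R) a := by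
      simpa using (hasDerivAt_id a).div_const R
    have d5 : HasDerivAt (fun x : ℝ => arcsin (x / R))
        (1 / Real.sqrt (1 - (a/R)^2) * (1 / R)) a :=
      HasDerivAt.comp (h₂ := arcsin) a (Real.hasDerivAt_arcsin h1 h2) d4
    have d6 := d3.add (d5.const_mul (R^2))
    refine d6.congr_deriv ?_
    symm
    have hsq : Real.sqrt (1 - (a/R)^2) = Real.sqrt (R^2 - a^2) / R := by
      rw [show 1 - (a/R)^2 = (R^2 - a^2) / R^2 by field_simp,
        Real.sqrt_div hpos.le, Real.sqrt_sq hR.le]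
    rw [hsq]
    field_simp
    linear_combination hss
  have hcont : ContinuousOn F (Set.Icc h R) := by
    apply Continuous.continuousOn
    exact (continuous_id.mul (Real.continuous_sqrt.comp
        (continuous_const.sub (continuous_pow 2)))).add
      (continuous_const.mul (Real.continuous_arcsin.comp (continuous_id.div_const R)))
  have hint : IntervalIntegrable (fun a => 2 * Real.sqrt (R^2 - a^2)) volume h R :=
    (continuous_const.mul (Real.continuous_sqrt.comp
      (continuous_const.sub (continuous_pow 2)))).intervalIntegrable _ _
  rw [intervalIntegral.integral_eq_sub_of_hasDerivAt_of_le hhR hcont key hint]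
  have hFR : F R = R^2 * (π/2) := by
    simp only [hF]
    rw [show R^2 - R^2 = 0 by ring, Real.sqrt_zero, div_self hR.ne', Real.arcsin_one]
    ring
  rw [hFR, hF]
  ring

lemma seg_area {R h : ℝ} (hR : 0 < R) (h0 : 0 ≤ h) (hhR : h ≤ R) :
    volume {p : ℝ × ℝ | h ≤ p.1 ∧ p.1 ^ 2 + p.2 ^ 2 ≤ R ^ 2}
      = ENNReal.ofReal (R^2 * (π/2) - R^2 * arcsin (h/R) - h * Real.sqrt (R^2 - h^2)) := by
  have hmeas : MeasurableSet {p : ℝ × ℝ | h ≤ p.1 ∧ p.1 ^ 2 + p.2 ^ 2 ≤ R ^ 2} := by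
    apply MeasurableSet.inter
    · exact measurableSet_le measurable_const measurable_fst
    · exact measurableSet_le (((measurable_fst.pow_const 2).add (measurable_snd.pow_const 2))) measurable_const
  rw [Measure.volume_eq_prod, Measure.prod_apply hmeas]
  have hslice : ∀ a : ℝ,
      volume (Prod.mk a ⁻¹' {p : ℝ × ℝ | h ≤ p.1 ∧ p.1 ^ 2 + p.2 ^ 2 ≤ R ^ 2})
      = (Set.Icc h R).indicator (fun a => ENNReal.ofReal (2 * Real.sqrt (R^2 - a^2))) a := by
    intro a
    by_cases haI : a ∈ Set.Icc h R
    · have hnn : 0 ≤ R^2 - a^2 := by nlinarith [haI.1, haI.2]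
      have hpre : Prod.mk a ⁻¹' {p : ℝ × ℝ | h ≤ p.1 ∧ p.1 ^ 2 + p.2 ^ 2 ≤ R ^ 2}
          = Set.Icc (-(Real.sqrt (R^2 - a^2))) (Real.sqrt (R^2 - a^2)) := by
        ext b
        simp only [Set.mem_preimage, Set.mem_setOf_eq, Set.mem_Icc]
        constructor
        · rintro ⟨-, hb⟩
          exact (Real.sq_le hnn).1 (by linarith)
        · intro hb
          refine ⟨haI.1, ?_⟩
          have := (Real.sq_le hnn).2 hb
          linarith
      rw [hpre, Real.volume_Icc, Set.indicator_of_mem haI]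
      congr 1; ring
    · have hpre : Prod.mk a ⁻¹' {p : ℝ × ℝ | h ≤ p.1 ∧ p.1 ^ 2 + p.2 ^ 2 ≤ R ^ 2} = ∅ := by
        ext b
        simp only [Set.mem_preimage, Set.mem_setOf_eq, Set.mem_empty_iff_false, iff_false,
          not_and]
        intro h1
        intro h2
        apply haI
        refine ⟨h1, ?_⟩
        nlinarith [sq_nonneg b, h0.trans h1]
      rw [hpre, Set.indicator_of_notMem haI]
      simp
  simp_rw [hslice]
  rw [lintegral_indicator measurableSet_Icc]
  have hInt : IntegrableOn (fun a => 2 * Real.sqrt (R^2 - a^2)) (Set.Icc h R) := by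
    apply Continuous.integrableOn_Icc
    exact continuous_const.mul (Real.continuous_sqrt.comp
      (continuous_const.sub (continuous_pow 2)))
  rw [← ofReal_integral_eq_lintegral_ofReal hInt
      (Filter.Eventually.of_forall fun a => by positivity)]
  rw [MeasureTheory.integral_Icc_eq_integral_Ioc, ← intervalIntegral.integral_of_le hhR,
    seg_integral hR h0 hhR]

lemma lens_planar {R ℓ : ℝ} (hR : 0 < R) (h0 : 0 ≤ ℓ) (h2R : ℓ ≤ 2 * R) :
    volume {p : ℝ × ℝ | p.1 ^ 2 + p.2 ^ 2 ≤ R ^ 2 ∧ (p.1 - ℓ) ^ 2 + p.2 ^ 2 ≤ R ^ 2}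
      = ENNReal.ofReal (2 * (R^2 * (π/2) - R^2 * arcsin ((ℓ/2)/R)
          - (ℓ/2) * Real.sqrt (R^2 - (ℓ/2)^2))) := by
  set A : Set (ℝ × ℝ) := {p | ℓ/2 ≤ p.1 ∧ p.1 ^ 2 + p.2 ^ 2 ≤ R ^ 2} with hA
  set B : Set (ℝ × ℝ) := {p | p.1 ≤ ℓ/2 ∧ (p.1 - ℓ) ^ 2 + p.2 ^ 2 ≤ R ^ 2} with hB
  have hAmeas : MeasurableSet A :=
    (measurableSet_le measurable_const measurable_fst).inter
      (measurableSet_le ((measurable_fst.pow_const 2).add (measurable_snd.pow_const 2))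
        measurable_const)
  have hBmeas : MeasurableSet B :=
    (measurableSet_le measurable_fst measurable_const).inter
      (measurableSet_le (((measurable_fst.sub measurable_const).pow_const 2).add
        (measurable_snd.pow_const 2)) measurable_const)
  have hcover : {p : ℝ × ℝ | p.1 ^ 2 + p.2 ^ 2 ≤ R ^ 2 ∧ (p.1 - ℓ) ^ 2 + p.2 ^ 2 ≤ R ^ 2}
      = A ∪ B := by
    ext p
    simp only [Set.mem_setOf_eq, Set.mem_union, hA, hB]
    constructor
    · rintro ⟨h1, h2⟩
      rcases le_total (ℓ/2) p.1 with hc | hc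
      · exact Or.inl ⟨hc, h1⟩
      · exact Or.inr ⟨hc, h2⟩
    · rintro (⟨hc, hb⟩ | ⟨hc, hb⟩)
      · exact ⟨hb, by nlinarith⟩
      · exact ⟨by nlinarith, hb⟩
  have hline : volume {p : ℝ × ℝ | p.1 = ℓ/2} = 0 := by
    have : {p : ℝ × ℝ | p.1 = ℓ/2} = {ℓ/2} ×ˢ (Set.univ : Set ℝ) := by
      ext p
      simp only [Set.mem_setOf_eq, Set.mem_prod, Set.mem_singleton_iff, Set.mem_univ, and_true]
    rw [this, Measure.volume_eq_prod, Measure.prod_prod]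
    simp
  have hinter : volume (A ∩ B) = 0 := by
    refine measure_mono_null ?_ hline
    rintro p ⟨⟨h1, -⟩, ⟨h2, -⟩⟩
    exact le_antisymm h2 h1
  have hBA : volume B = volume A := by
    have hφ : MeasurePreserving (fun p : ℝ × ℝ => (ℓ - p.1, p.2)) volume volume := by
      rw [Measure.volume_eq_prod]
      exact (Measure.measurePreserving_sub_left volume ℓ).prod (MeasurePreserving.id volume)
    have hpre : B = (fun p : ℝ × ℝ => (ℓ - p.1, p.2)) ⁻¹' A := by
      ext p
      simp only [hA, hB, Set.mem_preimage, Set.mem_setOf_eq]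
      constructor
      · rintro ⟨h1, h2⟩
        exact ⟨by linarith, by nlinarith⟩
      · rintro ⟨h1, h2⟩
        exact ⟨by linarith, by nlinarith⟩
    rw [hpre, hφ.measure_preimage hAmeas.nullMeasurableSet]
  have hAval := seg_area hR (by linarith : (0:ℝ) ≤ ℓ/2) (by linarith : ℓ/2 ≤ R)
  have hx0 : 0 ≤ R^2 * (π/2) - R^2 * arcsin ((ℓ/2)/R) - (ℓ/2) * Real.sqrt (R^2 - (ℓ/2)^2) := by
    rw [← seg_integral hR (by linarith : (0:ℝ) ≤ ℓ/2) (by linarith : ℓ/2 ≤ R)]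
    exact intervalIntegral.integral_nonneg (by linarith) (fun u _ => by positivity)
  have hsum : volume (A ∪ B) + volume (A ∩ B) = volume A + volume B :=
    measure_union_add_inter A hBmeas
  rw [hinter, add_zero] at hsum
  rw [hcover, hsum, hBA, hAval, ← ENNReal.ofReal_add hx0 hx0]
  congr 1
  ring

theorem lens_area (r : ℝ) (hr : 0 < r)
    (x y : EuclideanSpace ℝ (Fin 2)) (ℓ : ℝ) (hℓ : ℓ = dist x y)
    (hℓ0 : 0 ≤ ℓ) (hℓ4 : ℓ ≤ 4 * r) :
    volume (closedBall x (2 * r) ∩ closedBall y (2 * r)) =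
      ENNReal.ofReal
        (4 * π * r ^ 2 -
          r ^ 2 * (8 * arcsin (ℓ / (4 * r)) +
            (ℓ / r) * Real.sqrt (4 - ℓ ^ 2 / (4 * r ^ 2)))) := by
  have hR : (0:ℝ) < 2 * r := by positivity
  set w : EuclideanSpace ℝ (Fin 2) := ℓ • EuclideanSpace.single (0 : Fin 2) (1:ℝ) with hw
  have hw0 : w 0 = ℓ := by simp [hw, EuclideanSpace.single_apply]
  have hw1 : w 1 = 0 := by simp [hw, EuclideanSpace.single_apply]
  have hnw : ‖w‖ = ℓ := by
    rw [hw, norm_smul, EuclideanSpace.norm_single]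
    simp [abs_of_nonneg hℓ0]
  have hnv : ‖y - x‖ = ℓ := by
    rw [← dist_eq_norm, dist_comm, ← hℓ]
  set f := Submodule.reflection (ℝ ∙ ((y - x) - w))ᗮ with hf
  have hfv : f (y - x) = w := Submodule.reflection_sub (by rw [hnv, hnw])
  set T : EuclideanSpace ℝ (Fin 2) → EuclideanSpace ℝ (Fin 2) := fun p => f (p - x) with hT
  have hTmp : MeasurePreserving T volume volume := by
    have h1 : MeasurePreserving (fun p : EuclideanSpace ℝ (Fin 2) => p + (-x)) volume volume :=
      measurePreserving_add_right volume (-x)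
    have h2 := (f.measurePreserving).comp h1
    have he : T = (⇑f ∘ fun p => p + -x) := by
      funext p
      simp only [hT, Function.comp_apply, sub_eq_add_neg]
    rwa [he]
  set ψ : EuclideanSpace ℝ (Fin 2) → ℝ × ℝ := fun p => (p 0, p 1) with hψdef
  have hψ : MeasurePreserving ψ volume volume :=
    (volume_preserving_finTwoArrow ℝ).comp
      (PiLp.volume_preserving_ofLp (Fin 2))
  set S : Set (ℝ × ℝ) :=
    {p | p.1 ^ 2 + p.2 ^ 2 ≤ (2*r) ^ 2 ∧ (p.1 - ℓ) ^ 2 + p.2 ^ 2 ≤ (2*r) ^ 2} with hS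
  have hSmeas : MeasurableSet S := by
    apply MeasurableSet.inter
    · exact measurableSet_le ((measurable_fst.pow_const 2).add (measurable_snd.pow_const 2))
        measurable_const
    · exact measurableSet_le (((measurable_fst.sub measurable_const).pow_const 2).add
        (measurable_snd.pow_const 2)) measurable_const
  have key : ∀ (q z : EuclideanSpace ℝ (Fin 2)) (c : ℝ), 0 ≤ c →
      (dist q z ≤ c ↔ (q 0 - z 0)^2 + (q 1 - z 1)^2 ≤ c^2) := by
    intro q z c hc
    rw [EuclideanSpace.dist_eq, Fin.sum_univ_two, Real.dist_eq, Real.dist_eq, sq_abs, sq_abs,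
      Real.sqrt_le_iff]
    tauto
  have hset : closedBall x (2*r) ∩ closedBall y (2*r) = (fun p => ψ (T p)) ⁻¹' S := by
    ext p
    have e1 : dist p x = dist (T p) 0 := by
      rw [hT, dist_zero_right, f.norm_map, dist_eq_norm]
    have e2 : dist p y = dist (T p) w := by
      show dist p y = dist (f (p - x)) w
      rw [← hfv, f.dist_map, dist_sub_right]
    simp only [Set.mem_inter_iff, mem_closedBall, Set.mem_preimage, hS, Set.mem_setOf_eq,
      hψdef, e1, e2, key _ _ _ hR.le, hw0, hw1]
    norm_num
  rw [hset]
  have hcomp := (hψ.comp hTmp).measure_preimage hSmeas.nullMeasurableSet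
  rw [show (fun p => ψ (T p)) = ψ ∘ T from rfl, hcomp, hS]
  rw [lens_planar hR hℓ0 (by linarith : ℓ ≤ 2 * (2*r))]
  congr 1
  have earg : ℓ/2/(2*r) = ℓ/(4*r) := by ring
  have esqrt : Real.sqrt ((2*r)^2 - (ℓ/2)^2) = r * Real.sqrt (4 - ℓ^2/(4*r^2)) := by
    rw [show (2*r)^2 - (ℓ/2)^2 = r^2 * (4 - ℓ^2/(4*r^2)) by field_simp; ring]
    rw [Real.sqrt_mul (sq_nonneg r), Real.sqrt_sq hr.le]
  rw [earg, esqrt]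
  field_simp
  ring
end

section
/- Let r > 0, ℓ > 0, s > 0 with |ℓ − 2r| ≤ s ≤ ℓ + 2r, and in the Euclidean plane let y be a point and x = y + (ℓ, 0). Then the Lebesgue measure of the set of angles {φ ∈ (−π, π] : dist(y + (s·cos φ, s·sin φ), x) > 2r} equals 2·(π − arccos((s² + ℓ² − 4r²)/(2ℓs))). -/
open Real MeasureTheory Metric

theorem arc_angle_measure (r ℓ s : ℝ) (hr : 0 < r) (hℓ : 0 < ℓ) (hs : 0 < s)
    (h1 : |ℓ - 2 * r| ≤ s) (h2 : s ≤ ℓ + 2 * r)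
    (y x : EuclideanSpace ℝ (Fin 2)) (hx : x = y + (WithLp.equiv 2 (Fin 2 → ℝ)).symm ![ℓ, 0]) :
    volume {φ : ℝ | φ ∈ Set.Ioc (-π) π ∧
        2 * r < dist (y + (WithLp.equiv 2 (Fin 2 → ℝ)).symm ![s * Real.cos φ, s * Real.sin φ]) x} =
      ENNReal.ofReal
        (2 * (π - arccos ((s ^ 2 + ℓ ^ 2 - 4 * r ^ 2) / (2 * ℓ * s)))) := by
  obtain ⟨ha, hb⟩ := abs_le.mp h1
  set c : ℝ := (s ^ 2 + ℓ ^ 2 - 4 * r ^ 2) / (2 * ℓ * s) with hc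
  have hls : 0 < 2 * ℓ * s := by positivity
  have hc1 : -1 ≤ c := by rw [hc, le_div_iff₀ hls]; nlinarith
  have hc2 : c ≤ 1 := by rw [hc, div_le_iff₀ hls]; nlinarith
  set θ := arccos c with hθ
  have hθ0 : 0 ≤ θ := arccos_nonneg c
  have hθπ : θ ≤ π := arccos_le_pi c
  have hcosθ : Real.cos θ = c := Real.cos_arccos hc1 hc2
  have key : ∀ φ : ℝ,
      (2 * r < dist (y + (WithLp.equiv 2 (Fin 2 → ℝ)).symm ![s * Real.cos φ, s * Real.sin φ]) x)
      ↔ Real.cos φ < c := by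
    intro φ
    rw [hx, dist_add_left]
    have hd : dist ((WithLp.equiv 2 (Fin 2 → ℝ)).symm ![s * Real.cos φ, s * Real.sin φ])
        ((WithLp.equiv 2 (Fin 2 → ℝ)).symm ![ℓ, 0])
        = Real.sqrt (s ^ 2 + ℓ ^ 2 - 2 * ℓ * s * Real.cos φ) := by
      rw [EuclideanSpace.dist_eq]
      congr 1
      simp [Fin.sum_univ_two, Real.dist_eq, sq_abs]
      nlinarith [Real.sin_sq_add_cos_sq φ]
    rw [hd, show (2*r : ℝ) = Real.sqrt ((2*r)^2) by rw [Real.sqrt_sq (by positivity)],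
      Real.sqrt_lt_sqrt_iff (by positivity)]
    rw [hc, lt_div_iff₀ hls]
    constructor <;> intro h <;> nlinarith
  have hset : {φ : ℝ | φ ∈ Set.Ioc (-π) π ∧
      2 * r < dist (y + (WithLp.equiv 2 (Fin 2 → ℝ)).symm ![s * Real.cos φ, s * Real.sin φ]) x}
      = Set.Ioo (-π) (-θ) ∪ Set.Ioc θ π := by
    ext φ
    simp only [Set.mem_setOf_eq, Set.mem_Ioc, Set.mem_union, Set.mem_Ioo, key]
    constructor
    · rintro ⟨⟨hp1, hp2⟩, h3⟩
      rw [← hcosθ] at h3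
      rcases le_or_gt 0 φ with hφ | hφ
      · right
        refine ⟨?_, hp2⟩
        by_contra hle
        push_neg at hle
        exact absurd h3 (not_lt.mpr (Real.cos_le_cos_of_nonneg_of_le_pi hφ hθπ hle))
      · left
        refine ⟨hp1, ?_⟩
        by_contra hle
        push_neg at hle
        have : Real.cos θ ≤ Real.cos (-φ) :=
          Real.cos_le_cos_of_nonneg_of_le_pi (by linarith) hθπ (by linarith)
        rw [Real.cos_neg] at this
        exact absurd h3 (not_lt.mpr this)
    · intro h
      rcases h with ⟨hp1, hp2⟩ | ⟨hp1, hp2⟩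
      · have hπ : 0 < π := Real.pi_pos
        refine ⟨⟨hp1, by linarith⟩, ?_⟩
        rw [← hcosθ, ← Real.cos_neg φ]
        exact Real.cos_lt_cos_of_nonneg_of_le_pi hθ0 (by linarith) (by linarith)
      · refine ⟨⟨by linarith, hp2⟩, ?_⟩
        rw [← hcosθ]
        exact Real.cos_lt_cos_of_nonneg_of_le_pi hθ0 hp2 hp1
  rw [hset, measure_union ?_ measurableSet_Ioc]
  · rw [Real.volume_Ioo, Real.volume_Ioc,
      ← ENNReal.ofReal_add (by linarith) (by linarith)]
    congr 1
    ring
  · rw [Set.disjoint_left]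
    rintro a ⟨_, ha2⟩ ⟨ha3, _⟩
    linarith
end

section
/- Let Ω be a measurable space, let ρ : Ω × Ω → ℝ be a bounded nonnegative measurable function, let K be a Markov kernel on Ω × Ω, and let α > 0. Suppose that for every pair p ∈ Ω × Ω, ∫ ρ dK(p) ≤ e^{−α}·ρ(p). Then for every starting pair p₀, every t ∈ ℕ, and every ε > 0, the probability under the t-step distribution (K^t)(p₀) of the event {q ∈ Ω × Ω : ρ(q) > ε} is at most (ρ(p₀)/ε)·e^{−αt}. -/
open MeasureTheory ProbabilityTheory
open scoped ENNReal

noncomputable def iterKernel {S : Type*} [MeasurableSpace S]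
    (K : Kernel S S) : ℕ → Kernel S S
  | 0 => Kernel.id
  | (t + 1) => K ∘ₖ iterKernel K t

theorem path_coupling_tail_bound {Ω : Type*} [MeasurableSpace Ω]
    (ρ : Ω × Ω → ℝ) (hmeas : Measurable ρ) (hnonneg : ∀ p, 0 ≤ ρ p)
    (hbdd : ∃ C : ℝ, ∀ p, ρ p ≤ C)
    (K : Kernel (Ω × Ω) (Ω × Ω)) [IsMarkovKernel K]
    (α : ℝ) (hα : 0 < α)
    (hcontract : ∀ p, ∫ q, ρ q ∂(K p) ≤ Real.exp (-α) * ρ p) :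
    ∀ (p₀ : Ω × Ω) (t : ℕ) (ε : ℝ), 0 < ε →
      (iterKernel K t p₀) {q : Ω × Ω | ε < ρ q} ≤
        ENNReal.ofReal (ρ p₀ / ε * Real.exp (-α * t)) := by
  intro p₀ t ε hε
  set g : Ω × Ω → ℝ≥0∞ := fun q => ENNReal.ofReal (ρ q) with hg
  have hgmeas : Measurable g := hmeas.ennreal_ofReal
  -- lintegral form of contraction
  have hlcontract : ∀ p, ∫⁻ q, g q ∂(K p) ≤ ENNReal.ofReal (Real.exp (-α)) * g p := by
    intro p
    obtain ⟨C, hC⟩ := hbdd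
    have hint : Integrable ρ (K p) := by
      refine ⟨hmeas.aestronglyMeasurable, ?_⟩
      apply MeasureTheory.HasFiniteIntegral.of_bounded (C := C)
      filter_upwards with a
      rw [Real.norm_eq_abs, abs_of_nonneg (hnonneg a)]
      exact hC a
    have : ∫⁻ q, g q ∂(K p) = ENNReal.ofReal (∫ q, ρ q ∂(K p)) := by
      rw [← ofReal_integral_eq_lintegral_ofReal hint (Filter.Eventually.of_forall hnonneg)]
    rw [this, hg, ← ENNReal.ofReal_mul (Real.exp_nonneg _)]
    exact ENNReal.ofReal_le_ofReal (hcontract p)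
  -- induction: contraction of t-step integral
  have key : ∀ t, ∫⁻ q, g q ∂(iterKernel K t p₀) ≤
      ENNReal.ofReal (Real.exp (-α)) ^ t * g p₀ := by
    intro t
    induction t with
    | zero => simp [iterKernel, Kernel.id_apply, lintegral_dirac' _ hgmeas]
    | succ n ih =>
      have hcomp : ∫⁻ q, g q ∂(iterKernel K (n + 1) p₀)
          = ∫⁻ p, ∫⁻ q, g q ∂(K p) ∂(iterKernel K n p₀) := by
        show ∫⁻ q, g q ∂((K ∘ₖ iterKernel K n) p₀) = _
        exact Kernel.lintegral_comp _ _ _ hgmeas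
      rw [hcomp]
      calc ∫⁻ p, ∫⁻ q, g q ∂(K p) ∂(iterKernel K n p₀)
          ≤ ∫⁻ p, ENNReal.ofReal (Real.exp (-α)) * g p ∂(iterKernel K n p₀) :=
            lintegral_mono fun p => hlcontract p
        _ = ENNReal.ofReal (Real.exp (-α)) * ∫⁻ p, g p ∂(iterKernel K n p₀) :=
            lintegral_const_mul _ hgmeas
        _ ≤ ENNReal.ofReal (Real.exp (-α)) *
            (ENNReal.ofReal (Real.exp (-α)) ^ n * g p₀) := by
            exact mul_le_mul_right ih _
        _ = ENNReal.ofReal (Real.exp (-α)) ^ (n + 1) * g p₀ := by ring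
  -- Markov inequality
  have hsub : {q : Ω × Ω | ε < ρ q} ⊆ {q : Ω × Ω | ENNReal.ofReal ε ≤ g q} := by
    intro q hq
    exact le_of_lt ((ENNReal.ofReal_lt_ofReal_iff (lt_of_le_of_lt hε.le hq)).mpr hq)
  have hεne : ENNReal.ofReal ε ≠ 0 := by
    simp [ENNReal.ofReal_eq_zero, not_le, hε]
  have hmarkov : (iterKernel K t p₀) {q : Ω × Ω | ε < ρ q} ≤
      (∫⁻ q, g q ∂(iterKernel K t p₀)) / ENNReal.ofReal ε := by
    refine le_trans (measure_mono hsub) ?_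
    rw [ENNReal.le_div_iff_mul_le (Or.inl hεne) (Or.inl ENNReal.ofReal_ne_top), mul_comm]
    exact mul_meas_ge_le_lintegral hgmeas _
  refine hmarkov.trans ?_
  calc (∫⁻ q, g q ∂(iterKernel K t p₀)) / ENNReal.ofReal ε
      ≤ (ENNReal.ofReal (Real.exp (-α)) ^ t * g p₀) / ENNReal.ofReal ε :=
        ENNReal.div_le_div_right (key t) _
    _ = ENNReal.ofReal (ρ p₀ / ε * Real.exp (-α * t)) := by
        rw [show -α * (t : ℝ) = (t : ℕ) * (-α) by push_cast; ring, Real.exp_nat_mul,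
          show ρ p₀ / ε * Real.exp (-α) ^ t = Real.exp (-α) ^ t * ρ p₀ / ε by ring,
          ENNReal.ofReal_div_of_pos hε,
          ENNReal.ofReal_mul (pow_nonneg (Real.exp_nonneg _) _),
          ENNReal.ofReal_pow (Real.exp_nonneg _)]
end
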